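/- Fix a packet size d > 0. The finite-blocklength auxiliary function ω(m,γ) = √(m / V(γ)) · (C(γ) − d/m) · ln 2, with C(γ) = log₂(1+γ) and V(γ) = 1 − (1+γ)^{−2}, is strictly increasing in m on (0, ∞) for each fixed γ > 0, and strictly increasing in γ on (0, ∞) for each fixed m > 0. In particular its partial derivative with respect to m equals (ln 2 / 2) · m^{−1/2} · V(γ)^{−1/2} · (C(γ) + d/m) > 0. -/

import Mathlib

/-- The Gaussian Q-function `Q(x) = ∫ₓ^∞ (1/√(2π)) e^{−t²/2} dt`. -/
noncomputable def gaussianQ (x : ℝ) : ℝ :=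
  ∫ t in Set.Ioi x, (Real.sqrt (2 * Real.pi))⁻¹ * Real.exp (-t ^ 2 / 2)

/-- Shannon capacity `C(γ) = log₂(1+γ)`. -/
noncomputable def Cap (γ : ℝ) : ℝ := Real.logb 2 (1 + γ)

/-- Channel dispersion `V(γ) = 1 − (1+γ)^{−2}`. -/
noncomputable def Vdisp (γ : ℝ) : ℝ := 1 - ((1 + γ) ^ 2)⁻¹

/-- The finite-blocklength auxiliary function
`ω(m,γ) = √(m / V(γ)) · (C(γ) − d/m) · ln 2`. -/
noncomputable def ωfbl (d γ m : ℝ) : ℝ :=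
  Real.sqrt (m / Vdisp γ) * (Cap γ - d / m) * Real.log 2

lemma V_pos {γ : ℝ} (hγ : 0 < γ) : 0 < Vdisp γ := by
  unfold Vdisp
  have h1 : (1:ℝ) < (1+γ)^2 := by nlinarith
  have h2 : ((1+γ)^2)⁻¹ < 1 := by
    rw [inv_lt_one_iff₀]; right; exact h1
  linarith

lemma Cap_pos {γ : ℝ} (hγ : 0 < γ) : 0 < Cap γ :=
  Real.logb_pos (by norm_num) (by linarith)

lemma hasDerivAt_V {γ : ℝ} (hγ : 0 < γ) :
    HasDerivAt Vdisp (2 / (1+γ)^3) γ := by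
  have hu : (0:ℝ) < 1 + γ := by linarith
  have h1 : HasDerivAt (fun x : ℝ => (1+x)^2) (2*(1+γ)) γ := by
    have := ((hasDerivAt_id γ).const_add 1).pow 2
    exact this.congr_deriv (by simp)
  have h2 := (h1.inv (by positivity)).const_sub 1
  refine h2.congr_deriv ?_
  field_simp

lemma hasDerivAt_C {γ : ℝ} (hγ : 0 < γ) :
    HasDerivAt Cap (1 / ((1+γ) * Real.log 2)) γ := by
  have hu : (0:ℝ) < 1 + γ := by linarith
  have h1 : HasDerivAt (fun x : ℝ => Real.log (1+x)) (1/(1+γ)) γ := by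
    have := (Real.hasDerivAt_log hu.ne').comp γ ((hasDerivAt_id γ).const_add 1)
    exact this.congr_deriv (by simp)
  have h2 := h1.div_const (Real.log 2)
  have he : Cap = fun x : ℝ => Real.log (1+x) / Real.log 2 := by
    funext x; simp [Cap, Real.logb]
  rw [he]
  refine h2.congr_deriv ?_
  field_simp

lemma hasDerivAt_m (d γ : ℝ) (hγ : 0 < γ) {m : ℝ} (hm : 0 < m) :
    HasDerivAt (fun m => ωfbl d γ m)
      (Real.log 2 / 2 * (Real.sqrt m)⁻¹ * (Real.sqrt (Vdisp γ))⁻¹ * (Cap γ + d / m)) m := by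
  have hV := V_pos hγ
  have hsV : 0 < Real.sqrt (Vdisp γ) := Real.sqrt_pos.2 hV
  have hsm : 0 < Real.sqrt m := Real.sqrt_pos.2 hm
  have hs : HasDerivAt Real.sqrt (1/(2*Real.sqrt m)) m := Real.hasDerivAt_sqrt hm.ne'
  have h1 : HasDerivAt (fun x => Cap γ * Real.sqrt x - d * (Real.sqrt x)⁻¹)
      (Cap γ * (1/(2*Real.sqrt m)) - d * (-(1/(2*Real.sqrt m)) / (Real.sqrt m)^2)) m :=
    (hs.const_mul (Cap γ)).sub ((hs.inv hsm.ne').const_mul d)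
  have h2 := h1.mul_const (Real.log 2 / Real.sqrt (Vdisp γ))
  have heq : (fun m => ωfbl d γ m) =ᶠ[nhds m]
      (fun x => (Cap γ * Real.sqrt x - d * (Real.sqrt x)⁻¹) * (Real.log 2 / Real.sqrt (Vdisp γ))) := by
    filter_upwards [Ioi_mem_nhds hm] with x hx
    have hx0 : (0:ℝ) < x := hx
    have hsx : 0 < Real.sqrt x := Real.sqrt_pos.2 hx0
    have hx2 : Real.sqrt x ^ 2 = x := Real.sq_sqrt hx0.le
    obtain ⟨s, hs0, rfl⟩ : ∃ s:ℝ, 0 < s ∧ x = s^2 :=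
      ⟨Real.sqrt x, hsx, (Real.sq_sqrt hx0.le).symm⟩
    unfold ωfbl
    rw [Real.sqrt_div (by positivity), Real.sqrt_sq hs0.le]
    field_simp
  have h3 := h2.congr_of_eventuallyEq heq
  refine h3.congr_deriv ?_
  obtain ⟨s, hs0, rfl⟩ : ∃ s:ℝ, 0 < s ∧ m = s^2 :=
    ⟨Real.sqrt m, hsm, (Real.sq_sqrt hm.le).symm⟩
  rw [Real.sqrt_sq hs0.le]
  field_simp
  ring

lemma hasDerivAt_gamma (d m : ℝ) (hd : 0 < d) (hm : 0 < m) {γ : ℝ} (hγ : 0 < γ) :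
    ∃ D, HasDerivAt (fun γ => ωfbl d γ m) D γ ∧ 0 < D := by
  have hu : (0:ℝ) < 1 + γ := by linarith
  have hV := V_pos hγ
  have hsV : 0 < Real.sqrt (Vdisp γ) := Real.sqrt_pos.2 hV
  have hsm : 0 < Real.sqrt m := Real.sqrt_pos.2 hm
  have hL : 0 < Real.log 2 := Real.log_pos one_lt_two
  set s := Real.sqrt (Vdisp γ) with hsdef
  have hVs : HasDerivAt (fun x => Real.sqrt (Vdisp x)) (2/(1+γ)^3 / (2*s)) γ :=
    (hasDerivAt_V hγ).sqrt hV.ne'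
  have hA : HasDerivAt (fun x => (Real.sqrt (Vdisp x))⁻¹)
      (-(2/(1+γ)^3 / (2*s)) / s^2) γ := hVs.inv hsV.ne'
  have hB : HasDerivAt (fun x => Cap x - d/m) (1/((1+γ)*Real.log 2)) γ :=
    (hasDerivAt_C hγ).sub_const _
  have hAB := hA.mul hB
  have h2 := (hAB.const_mul (Real.sqrt m)).mul_const (Real.log 2)
  have heq : (fun x => ωfbl d x m) =ᶠ[nhds γ]
      (fun x => Real.sqrt m * ((Real.sqrt (Vdisp x))⁻¹ * (Cap x - d/m)) * Real.log 2) := by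
    filter_upwards [Ioi_mem_nhds hγ] with x hx
    have hVx := V_pos (Set.mem_Ioi.1 hx)
    unfold ωfbl
    rw [Real.sqrt_div hm.le]
    field_simp
  have h3 := h2.congr_of_eventuallyEq heq
  refine ⟨_, h3, ?_⟩
  -- positivity of the derivative
  have hCval : Cap γ = Real.log (1+γ) / Real.log 2 := by simp [Cap, Real.logb]
  have h1 : (Cap γ - d/m) * Real.log 2 < (1+γ)^2 - 1 := by
    rw [hCval]
    have hlog := Real.log_le_sub_one_of_pos hu
    have hdm : 0 < d * Real.log 2 / m := by positivity
    have : (Real.log (1+γ)/Real.log 2 - d/m) * Real.log 2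
        = Real.log (1+γ) - d*Real.log 2/m := by field_simp
    rw [this]
    nlinarith
  have hs2u : s^2 * (1+γ)^2 = (1+γ)^2 - 1 := by
    rw [hsdef, Real.sq_sqrt hV.le]
    unfold Vdisp
    field_simp
  have hmid : -(2/(1+γ)^3 / (2*s)) / s^2 * (Cap γ - d/m) + s⁻¹ * (1/((1+γ)*Real.log 2))
      = ((1+γ)^2 - 1 - (Cap γ - d/m)*Real.log 2) / (Real.log 2 * (1+γ)^3 * s^3) := by
    field_simp
    linear_combination m * hs2u
  have hmidpos : 0 < -(2/(1+γ)^3 / (2*s)) / s^2 * (Cap γ - d/m) + s⁻¹ * (1/((1+γ)*Real.log 2)) := by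
    rw [hmid]
    apply div_pos (by linarith) (by positivity)
  have : 0 < Real.sqrt m * (-(2/(1+γ)^3 / (2*s)) / s^2 * (Cap γ - d/m)
      + (Real.sqrt (Vdisp γ))⁻¹ * (1/((1+γ)*Real.log 2))) * Real.log 2 := by
    apply mul_pos (mul_pos hsm _) hL
    simpa [hsdef] using hmidpos
  simpa using this

/-- For fixed `d > 0`, `ω(m,γ)` is strictly increasing in `m` on `(0,∞)`
for each `γ > 0`, strictly increasing in `γ` on `(0,∞)` for each `m > 0`, and its
partial derivative with respect to `m` equals
`(ln 2 / 2) · m^{−1/2} · V(γ)^{−1/2} · (C(γ) + d/m) > 0`. -/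
theorem statement2 (d : ℝ) (hd : 0 < d) :
    (∀ γ > (0 : ℝ), StrictMonoOn (fun m => ωfbl d γ m) (Set.Ioi (0 : ℝ))) ∧
    (∀ m > (0 : ℝ), StrictMonoOn (fun γ => ωfbl d γ m) (Set.Ioi (0 : ℝ))) ∧
    (∀ γ > (0 : ℝ), ∀ m > (0 : ℝ),
      HasDerivAt (fun m => ωfbl d γ m)
        (Real.log 2 / 2 * (Real.sqrt m)⁻¹ * (Real.sqrt (Vdisp γ))⁻¹ * (Cap γ + d / m)) m ∧
      0 < Real.log 2 / 2 * (Real.sqrt m)⁻¹ * (Real.sqrt (Vdisp γ))⁻¹ * (Cap γ + d / m)) := by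
  have hL : 0 < Real.log 2 := Real.log_pos one_lt_two
  have hpos : ∀ γ > (0:ℝ), ∀ m > (0:ℝ),
      0 < Real.log 2 / 2 * (Real.sqrt m)⁻¹ * (Real.sqrt (Vdisp γ))⁻¹ * (Cap γ + d / m) := by
    intro γ hγ m hm
    have h1 := Cap_pos hγ
    have h2 := V_pos hγ
    have h3 : 0 < d/m := div_pos hd hm
    have h4 : 0 < Real.sqrt m := Real.sqrt_pos.2 hm
    have h5 : 0 < Real.sqrt (Vdisp γ) := Real.sqrt_pos.2 h2
    positivity
  refine ⟨?_, ?_, fun γ hγ m hm => ⟨hasDerivAt_m d γ hγ hm, hpos γ hγ m hm⟩⟩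
  · intro γ hγ
    apply strictMonoOn_of_deriv_pos (convex_Ioi 0)
    · intro x hx
      exact (hasDerivAt_m d γ hγ hx).differentiableAt.continuousAt.continuousWithinAt
    · intro x hx
      rw [interior_Ioi] at hx
      rw [(hasDerivAt_m d γ hγ hx).deriv]
      exact hpos γ hγ x hx
  · intro m hm
    apply strictMonoOn_of_deriv_pos (convex_Ioi 0)
    · intro x hx
      obtain ⟨D, hD, _⟩ := hasDerivAt_gamma d m hd hm hx
      exact hD.differentiableAt.continuousAt.continuousWithinAt
    · intro x hx
      rw [interior_Ioi] at hx
      obtain ⟨D, hD, hDpos⟩ := hasDerivAt_gamma d m hd hm hx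
      rw [hD.deriv]
      exact hDpos
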